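/- For q of characteristic 2 and any k ≥ 1, there exists a self-dual basis of F_{q^k} over F_q, i.e., an F_q-basis {e_1,...,e_k} such that Tr_{F_{q^k}/F_q}(e_i e_j) = δ_{ij} for all i, j. -/

import Mathlib

open LinearMap Module LinearMap.BilinForm Submodule

open LinearMap Module LinearMap.BilinForm Submodule

/-- Good-vector lemma: in char 2 with all squares, any nondegenerate symmetric non-alternating
form has `v` with `B v v = 1` whose orthogonal complement is zero or non-alternating. -/
private theorem goodVec {K V : Type*} [Field K] [AddCommGroup V] [Module K V]
    [FiniteDimensional K V]
    (hsq : ∀ c : K, ∃ d : K, d * d = c) (h2 : (2 : K) = 0)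
    {B : LinearMap.BilinForm K V} (hsym : B.IsSymm) (hnd : B.Nondegenerate)
    {x : V} (hx : B x x ≠ 0) :
    ∃ v : V, B v v = 1 ∧ (Module.finrank K (B.orthogonal (K ∙ v)) = 0 ∨
        ∃ y : (B.orthogonal (K ∙ v)), B (y : V) (y : V) ≠ 0) := by
  obtain ⟨d, hd⟩ := hsq (B x x)
  have hd0 : d ≠ 0 := by rintro rfl; rw [mul_zero] at hd; exact hx hd.symm
  set v0 := d⁻¹ • x with hv0def
  have hbv0 : B v0 v0 = 1 := by
    have : B v0 v0 = d⁻¹ * (d⁻¹ * B x x) := by simp [hv0def]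
    rw [this, ← hd]; field_simp
  by_cases hcase : finrank K (B.orthogonal (K ∙ v0)) = 0 ∨
      ∃ y : (B.orthogonal (K ∙ v0)), B (y : V) (y : V) ≠ 0
  · exact ⟨v0, hbv0, hcase⟩
  push_neg at hcase
  obtain ⟨hfr, hall⟩ := hcase
  set W0 := B.orthogonal (K ∙ v0) with hW0def
  have hv0ortho : ¬ B.IsOrtho v0 v0 := by rw [LinearMap.BilinForm.isOrtho_def, hbv0]; exact one_ne_zero
  have hW0nd := B.restrict_nondegenerate_orthogonal_spanSingleton hnd hsym.isRefl hv0ortho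
  haveI : Nontrivial W0 := Module.finrank_pos_iff.mp (Nat.pos_of_ne_zero hfr)
  obtain ⟨u, hu0⟩ : ∃ u : W0, u ≠ 0 := exists_ne 0
  have : ∃ w0 : W0, B (u : V) (w0 : V) ≠ 0 := by
    by_contra h
    push_neg at h
    exact hu0 (hW0nd.1 u (fun n => by simpa using h n))
  obtain ⟨w0, hw0⟩ := this
  set t := B (u : V) (w0 : V) with ht
  set w : V := t⁻¹ • (w0 : V) with hwdef
  have hwW0 : w ∈ W0 := W0.smul_mem _ w0.2
  have huw : B (u : V) w = 1 := by
    rw [hwdef, map_smul, smul_eq_mul, ← ht, inv_mul_cancel₀ hw0]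
  have huu : B (u : V) (u : V) = 0 := hall u
  have hww : B w w = 0 := hall ⟨w, hwW0⟩
  -- orthogonality of v0 with members of W0
  have hov0 : ∀ z : V, z ∈ W0 → B v0 z = 0 := fun z hz =>
    hz v0 (Submodule.mem_span_singleton_self v0)
  have hov0' : ∀ z : V, z ∈ W0 → B z v0 = 0 := fun z hz => by
    have := hsym.eq v0 z
    rw [← this, hov0 z hz]
  set v := v0 + (u : V) with hvdef
  set y := v0 + w with hydef
  have hBvv : B v v = 1 := by
    rw [hvdef]
    simp only [map_add, LinearMap.add_apply]
    rw [hbv0, hov0 _ u.2, hov0' _ u.2, huu]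
    ring
  have hBvy : B v y = 0 := by
    rw [hvdef, hydef]
    simp only [map_add, LinearMap.add_apply]
    rw [hbv0, hov0 _ hwW0, hov0' _ u.2, huw]
    rw [add_zero, zero_add, one_add_one_eq_two, h2]
  have hByy : B y y = 1 := by
    rw [hydef]
    simp only [map_add, LinearMap.add_apply]
    rw [hbv0, hov0 _ hwW0, hov0' _ hwW0, hww]
    ring
  have hyW : y ∈ B.orthogonal (K ∙ v) := by
    intro n hn
    obtain ⟨c, rfl⟩ := Submodule.mem_span_singleton.1 hn
    show B (c • v) y = 0
    rw [map_smul, LinearMap.smul_apply, hBvy, smul_zero]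
  exact ⟨v, hBvv, Or.inr ⟨⟨y, hyW⟩, by rw [hByy]; exact one_ne_zero⟩⟩


private theorem exists_orthonormal {K : Type u} {V : Type v} [Field K] [AddCommGroup V]
    [Module K V] [FiniteDimensional K V]
    (hsq : ∀ c : K, ∃ d : K, d * d = c) (h2 : (2 : K) = 0)
    {B : LinearMap.BilinForm K V} (hsym : B.IsSymm) (hnd : B.Nondegenerate)
    (hna : finrank K V = 0 ∨ ∃ x : V, B x x ≠ 0) :
    ∃ v : Basis (Fin (finrank K V)) K V,
      ∀ i j, B (v i) (v j) = if i = j then 1 else 0 := by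
  induction' hd : finrank K V with n ih generalizing V
  · exact ⟨basisOfFinrankZero hd, fun i _ => i.elim0⟩
  obtain ⟨x, hx⟩ := hna.resolve_left (by omega)
  obtain ⟨v, hv1, hW⟩ := goodVec hsq h2 hsym hnd hx
  have hvne : B v v ≠ 0 := by rw [hv1]; exact one_ne_zero
  have hvo : ¬ B.IsOrtho v v := hvne
  have hcompl : IsCompl (K ∙ v) (B.orthogonal (K ∙ v)) :=
    BilinForm.isCompl_span_singleton_orthogonal hvo
  have hvnz : v ≠ 0 := fun h => hvne (by rw [h]; simp)
  have hdw : finrank K (B.orthogonal (K ∙ v)) = n := by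
    have h := Submodule.finrank_add_eq_of_isCompl hcompl
    rw [finrank_span_singleton hvnz, hd] at h
    omega
  have hsym' : (B.restrict (B.orthogonal (K ∙ v))).IsSymm := ⟨fun a b => hsym.eq a b⟩
  have hnd' : (B.restrict (B.orthogonal (K ∙ v))).Nondegenerate :=
    B.restrict_nondegenerate_orthogonal_spanSingleton hnd hsym.isRefl hvo
  have hna' : finrank K (B.orthogonal (K ∙ v)) = 0 ∨
      ∃ y : (B.orthogonal (K ∙ v)), (B.restrict _) y y ≠ 0 := by
    rcases hW with h | ⟨y, hy⟩
    · exact Or.inl h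
    · exact Or.inr ⟨y, hy⟩
  obtain ⟨v', hv'⟩ := ih hsym' hnd' hna' hdw
  -- concatenate
  let b := Basis.mkFinCons v v'
    (by
      rintro c y hy hc
      rw [add_eq_zero_iff_neg_eq] at hc
      rw [← hc, Submodule.neg_mem_iff] at hy
      have hdisj := hcompl.disjoint
      rw [Submodule.disjoint_def] at hdisj
      have := hdisj (c • v) (Submodule.smul_mem _ _ <| Submodule.mem_span_singleton_self _) hy
      exact (smul_eq_zero.1 this).resolve_right fun h => hvne <| h.symm ▸ map_zero _)
    (by
      intro y
      refine ⟨-B v y / B v v, fun z hz => ?_⟩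
      obtain ⟨c, rfl⟩ := Submodule.mem_span_singleton.1 hz
      rw [map_smul, LinearMap.smul_apply, map_add, map_smul, smul_eq_mul, smul_eq_mul,
        div_mul_cancel₀ _ hvne, add_neg_cancel, mul_zero])
  refine ⟨b, ?_⟩
  have hb : ⇑b = Fin.cons v ((↑) ∘ v') := Basis.coe_mkFinCons v v' _ _
  intro i j
  refine Fin.cases ?_ (fun i => ?_) i <;> refine Fin.cases ?_ (fun j => ?_) j <;>
    simp only [hb, Fin.cons_zero, Fin.cons_succ, Function.comp_apply]
  · simp [hv1]
  · rw [if_neg (Fin.succ_ne_zero j).symm]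
    exact (v' j).prop _ (Submodule.mem_span_singleton_self v)
  · rw [if_neg (Fin.succ_ne_zero i)]
    have := hsym.eq v (v' i)
    rw [← this]
    exact (v' i).prop _ (Submodule.mem_span_singleton_self v)
  · have h := hv' i j
    have he : ((B.restrict (B.orthogonal (K ∙ v))) (v' i)) (v' j) = B (v' i : V) (v' j : V) := rfl
    rw [he] at h
    rw [h]
    simp [Fin.succ_inj]

/-- For `q` of characteristic 2, there exists a self-dual basis of `F_{q^k}` over `F_q`. -/
theorem exists_self_dual_basis
    {F K : Type*} [Field F] [Fintype F] [CharP F 2] [Field K] [Fintype K] [Algebra F K]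
    {k : ℕ} (hk : 1 ≤ k) (hdim : Module.finrank F K = k) :
    ∃ e : Basis (Fin k) F K,
      ∀ i j, Algebra.trace F K (e i * e j) = if i = j then 1 else 0 := by
  subst hdim
  haveI : FiniteDimensional F K := Module.Finite.of_finite
  haveI : CharP K 2 := charP_of_injective_algebraMap (algebraMap F K).injective 2
  have hsq : ∀ c : F, ∃ d : F, d * d = c := fun c => by
    obtain ⟨d, hd⟩ := surjective_frobenius F 2 c
    exact ⟨d, by rwa [_root_.frobenius_def, pow_two] at hd⟩
  have h2 : (2 : F) = 0 := by exact_mod_cast CharP.cast_eq_zero F 2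
  have hsym := Algebra.traceForm_isSymm (R := F) (S := K)
  have hnd := traceForm_nondegenerate F K
  have hna : ∃ x : K, Algebra.traceForm F K x x ≠ 0 := by
    obtain ⟨a, ha⟩ := Algebra.trace_surjective F K 1
    obtain ⟨s, hs⟩ := surjective_frobenius K 2 a
    refine ⟨s, ?_⟩
    rw [Algebra.traceForm_apply]
    rw [_root_.frobenius_def, pow_two] at hs
    rw [hs, ha]
    exact one_ne_zero
  obtain ⟨e, he⟩ := exists_orthonormal hsq h2 hsym hnd (Or.inr hna)
  exact ⟨e, fun i j => by simpa [Algebra.traceForm_apply] using he i j⟩
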